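/- Let A, B, C be subspaces of E and o an E-orbit contained in X_A. Then the number of orbits 𝓜 of the E × B-action on X²_{AC} (given by (e,b)·(x,y) = (e+b+x, e+y)) satisfying p₁𝓜 = o equals |E| · |X̄_C| · |U_{ABC}| / (|A| · |B| · |C|), where X̄_C is the set of E-orbits in X_C and U_{ABC} := {(a,b,c) ∈ A × B × C : a + b + c = 0}. -/

import Mathlib

open scoped Classical

set_option linter.unusedSectionVars false

noncomputable section

namespace Lusztig

variable (E X : Type) [AddCommGroup E] [Module (ZMod 2) E] [Fintype E]
  [Fintype X] [AddAction E X]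

/-- The stabilizer of `x` in `E`, as a subset of `E`. -/
def stabSet (x : X) : Set E := {e : E | e +ᵥ x = x}

/-- `X_A`: the set of points of `X` whose stabilizer in `E` equals `A`. -/
def XA (A : Submodule (ZMod 2) E) : Set X := {x : X | stabSet E X x = (A : Set E)}

/-- `X²_{AB} = X_A × X_B`. -/
def X2 (A B : Submodule (ZMod 2) E) : Set (X × X) := (XA E X A) ×ˢ (XA E X B)

/-- The `E`-orbit of `x` in `X`. -/
def orb (x : X) : Set X := {y : X | ∃ e : E, y = e +ᵥ x}

/-- The `E`-orbit of `(x,y)` for the diagonal action of `E` on `X × X`. -/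
def orb2 (x y : X) : Set (X × X) := {q : X × X | ∃ e : E, q = (e +ᵥ x, e +ᵥ y)}

/-- `O` is an `E`-orbit (for the diagonal action) contained in `X²_{AB}`. -/
def IsOrb2 (A B : Submodule (ZMod 2) E) (O : Set (X × X)) : Prop :=
  ∃ x y : X, x ∈ XA E X A ∧ y ∈ XA E X B ∧ O = orb2 E X x y

/-- The `E × B`-orbit of `(x,y)` for the action `(e,b)·(x,y) = (e+b+x, e+y)`. -/
def orbEB (B : Submodule (ZMod 2) E) (x y : X) : Set (X × X) :=
  {q : X × X | ∃ e b : E, b ∈ B ∧ q = ((e + b) +ᵥ x, e +ᵥ y)}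

/-- `M` is an `E × B`-orbit contained in `X²_{AC}` for the action
`(e,b)·(x,y) = (e+b+x, e+y)`. -/
def IsOrbEB (A B C : Submodule (ZMod 2) E) (M : Set (X × X)) : Prop :=
  ∃ x y : X, x ∈ XA E X A ∧ y ∈ XA E X C ∧ M = orbEB E X B x y

/-- Image under the first projection. -/
def p1 (S : Set (X × X)) : Set X := Prod.fst '' S

/-- Image under the second projection. -/
def p2 (S : Set (X × X)) : Set X := Prod.snd '' S

/-- `U_{ABC} = {(a,b,c) ∈ A × B × C : a + b + c = 0}`. -/
def UABC (A B C : Submodule (ZMod 2) E) : Set (E × E × E) :=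
  {t : E × E × E | t.1 ∈ A ∧ t.2.1 ∈ B ∧ t.2.2 ∈ C ∧ t.1 + t.2.1 + t.2.2 = 0}

/-- `X̄_C`: the set of `E`-orbits contained in `X_C`. -/
def barX (C : Submodule (ZMod 2) E) : Set (Set X) :=
  {s : Set X | ∃ x ∈ XA E X C, s = orb E X x}

/-- The dual (space of linear forms `P → ℤ/2`) of a subspace `P` of `E`. -/
abbrev Dl (P : Submodule (ZMod 2) E) : Type := ↥P →ₗ[ZMod 2] ZMod 2

/-- Restriction of a linear form along an inclusion of subspaces. -/
def res {P Q : Submodule (ZMod 2) E} (h : P ≤ Q) (φ : Dl E Q) : Dl E P :=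
  φ.comp (Submodule.inclusion h)

theorem leAB (A B C : Submodule (ZMod 2) E) : A ⊓ B ⊓ C ≤ A ⊓ B := inf_le_left
theorem leBC (A B C : Submodule (ZMod 2) E) : A ⊓ B ⊓ C ≤ B ⊓ C :=
  le_inf (inf_le_left.trans inf_le_right) inf_le_right
theorem leAC (A B C : Submodule (ZMod 2) E) : A ⊓ B ⊓ C ≤ A ⊓ C :=
  le_inf (inf_le_left.trans inf_le_left) inf_le_right
theorem leBA (A B : Submodule (ZMod 2) E) : A ⊓ B ≤ B ⊓ A := le_inf inf_le_right inf_le_left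

/-- The convolution product `𝓕_{AB} × 𝓕_{BC} → 𝓕_{AC}`. -/
def conv (A B C : Submodule (ZMod 2) E)
    (f₁ : (X × X) × Dl E (A ⊓ B) → ℂ) (f₂ : (X × X) × Dl E (B ⊓ C) → ℂ) :
    (X × X) × Dl E (A ⊓ C) → ℂ :=
  fun p =>
    (∑ᶠ (y : X) (_ : y ∈ XA E X B) (ε₁ : Dl E (A ⊓ B)) (ε₂ : Dl E (B ⊓ C))
        (_ : res E (leAB E A B C) ε₁ + res E (leBC E A B C) ε₂
              + res E (leAC E A B C) p.2 = 0),
        f₁ ((p.1.1, y), ε₁) * f₂ ((y, p.1.2), ε₂)) *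
      (Nat.card ↥(A ⊓ B ⊓ C) : ℂ) / (Nat.card ↥(A ⊓ C) : ℂ)

/-- The defining conditions for membership in `𝓕_{AB}`: supported on `X²_{AB}` and
invariant under the diagonal `E`-action. -/
def MemF (A B : Submodule (ZMod 2) E) (f : (X × X) × Dl E (A ⊓ B) → ℂ) : Prop :=
  (∀ p : (X × X) × Dl E (A ⊓ B), p.1 ∉ X2 E X A B → f p = 0) ∧
  (∀ (e : E) (x y : X) (ε : Dl E (A ⊓ B)), f ((e +ᵥ x, e +ᵥ y), ε) = f ((x, y), ε))

/-- `𝓕_{AB}` as a subspace of the space of all functions. -/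
def FAB (A B : Submodule (ZMod 2) E) : Submodule ℂ ((X × X) × Dl E (A ⊓ B) → ℂ) where
  carrier := {f | MemF E X A B f}
  add_mem' := by
    intro a b ha hb
    exact ⟨fun p hp => by simp [ha.1 p hp, hb.1 p hp],
      fun e x y ε => by simp [Pi.add_apply, ha.2 e x y ε, hb.2 e x y ε]⟩
  zero_mem' := ⟨fun p hp => rfl, fun e x y ε => rfl⟩
  smul_mem' := by
    intro c a ha
    exact ⟨fun p hp => by simp [Pi.smul_apply, ha.1 p hp],
      fun e x y ε => by simp [Pi.smul_apply, ha.2 e x y ε]⟩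

/-- `[Ξ]^ε`. -/
def br (A B : Submodule (ZMod 2) E) (Ξ : Set (X × X)) (ε : Dl E (A ⊓ B)) :
    (X × X) × Dl E (A ⊓ B) → ℂ :=
  fun p => if p.1 ∈ Ξ ∧ p.2 = ε then 1 else 0

/-- The ambient space of `𝓕 = ⊕_{A,B} 𝓕_{AB}` (all summands at once). -/
abbrev FF : Type := ∀ A B : Submodule (ZMod 2) E, (X × X) × Dl E (A ⊓ B) → ℂ

/-- The embedding of the `(A,B)` summand into `𝓕`. -/
def emb (A B : Submodule (ZMod 2) E) (f : (X × X) × Dl E (A ⊓ B) → ℂ) : FF E X :=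
  fun A' B' p =>
    if h : A = A' ∧ B = B' then f (p.1, cast (by rw [h.1, h.2]) p.2) else 0

/-- `𝓕` as a subspace of `FF`: componentwise supported on `X²_{AB}` and `E`-invariant. -/
def FFsub : Submodule ℂ (FF E X) where
  carrier := {g | ∀ A B, MemF E X A B (g A B)}
  add_mem' := by
    intro a b ha hb A B
    exact ⟨fun p hp => by simp [(ha A B).1 p hp, (hb A B).1 p hp],
      fun e x y ε => by simp [(ha A B).2 e x y ε, (hb A B).2 e x y ε]⟩
  zero_mem' := fun A B => ⟨fun p hp => rfl, fun e x y ε => rfl⟩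
  smul_mem' := by
    intro c a ha A B
    exact ⟨fun p hp => by simp [(ha A B).1 p hp],
      fun e x y ε => by simp [(ha A B).2 e x y ε]⟩

/-- The product on `𝓕` (zero between summands `𝓕_{AB}`, `𝓕_{B'C}` with `B ≠ B'`). -/
def mulFF (g h : FF E X) : FF E X :=
  fun A C => ∑ᶠ B : Submodule (ZMod 2) E, conv E X A B C (g A B) (h B C)

/-- The diagonal `Δ_A ⊆ X²_{AA}`. -/
def diagSet (A : Submodule (ZMod 2) E) : Set (X × X) :=
  {q : X × X | q.1 ∈ XA E X A ∧ q.2 = q.1}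

/-- The element `∑_A [Δ_A]^0` of `𝓕`. -/
def unitFF : FF E X :=
  ∑ᶠ A : Submodule (ZMod 2) E, emb E X A A (br E X A A (diagSet E X A) 0)

/-- The map `f ↦ f^#` on `𝓕`. -/
def shFF (g : FF E X) : FF E X :=
  fun A B p => g B A ((p.1.2, p.1.1), res E (leBA E B A) p.2)

/-- `𝒪 • 𝒪'`. -/
def bullet (O O' : Set (X × X)) : Set (X × X) :=
  {q : X × X | ∃ y : X, (q.1, y) ∈ O ∧ (y, q.2) ∈ O'}

/-- `∑_{ε ∈ α̃} [𝓜]^ε ∈ 𝓕_{AC}`, where `α̃` is the fibre of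
`(A∩C)* → (A∩B∩C)*` over `α`. -/
def bSum (A B C : Submodule (ZMod 2) E) (M : Set (X × X)) (α : Dl E (A ⊓ B ⊓ C)) :
    (X × X) × Dl E (A ⊓ C) → ℂ :=
  ∑ᶠ (ε : Dl E (A ⊓ C)) (_ : res E (leAC E A B C) ε = α), br E X A C M ε

/-- The set `𝓑_{oBC} ⊆ 𝓕` (embedded in `FF`). -/
def BoBC (A B C : Submodule (ZMod 2) E) (o : Set X) : Set (FF E X) :=
  {g | ∃ (M : Set (X × X)) (α : Dl E (A ⊓ B ⊓ C)),
      IsOrbEB E X A B C M ∧ p1 X M = o ∧ g = emb E X A C (bSum E X A B C M α)}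

/-- The set `𝓑_{oB} = ⊔_C 𝓑_{oBC}`. -/
def BoB (A B : Submodule (ZMod 2) E) (o : Set X) : Set (FF E X) :=
  ⋃ C : Submodule (ZMod 2) E, BoBC E X A B C o

/-- `[[oB]]`, the `ℂ`-span of `𝓑_{oB}`. -/
def ooB (A B : Submodule (ZMod 2) E) (o : Set X) : Submodule ℂ (FF E X) :=
  Submodule.span ℂ (BoB E X A B o)


/-! ### Auxiliary lemmas for Statement 19 -/

theorem card_fiber {α β : Type} [Fintype α] [Fintype β] (f : α → β) (S : Set β)
    (hmem : ∀ a, f a ∈ S) (m n : ℕ) (h : ∀ b ∈ S, Nat.card {a // f a = b} * m = n) :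
    Fintype.card α * m = Nat.card ↥S * n := by
  classical
  have key : (Finset.univ : Finset α).card
      = ∑ b ∈ S.toFinset, (Finset.univ.filter (fun a => f a = b)).card :=
    Finset.card_eq_sum_card_fiberwise (by intro a _; simpa using hmem a)
  have h2 : ∀ b ∈ S.toFinset, (Finset.univ.filter (fun a => f a = b)).card * m = n := by
    intro b hb
    rw [← h b (Set.mem_toFinset.mp hb)]
    congr 1
    rw [Nat.card_eq_fintype_card, Fintype.card_subtype]
  calc Fintype.card α * m
      = ∑ b ∈ S.toFinset, (Finset.univ.filter (fun a => f a = b)).card * m := by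
        rw [Fintype.card, key, Finset.sum_mul]
    _ = ∑ _b ∈ S.toFinset, n := Finset.sum_congr rfl h2
    _ = S.toFinset.card * n := by rw [Finset.sum_const, smul_eq_mul]
    _ = Nat.card ↥S * n := by rw [Nat.card_eq_card_toFinset]

theorem h2' (z : E) : z + z = 0 := by
  have h : z + z = ((1 : ZMod 2) + 1) • z := by rw [add_smul, one_smul]
  have h1 : ((1 : ZMod 2) + 1) = 0 := by decide
  rw [h, h1, zero_smul]

theorem sm2 (z : E) : (2 : ℤ) • z = 0 := by rw [two_zsmul, h2']

variable {E X}

theorem neg_eq' (z : E) : -z = z := by rw [neg_eq_iff_add_eq_zero, h2']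

theorem addcan (a b : E) : a + b + b = a := by rw [add_assoc, h2', add_zero]

theorem vadd_congr {a c : E} (x : X) (h : a = c) : a +ᵥ x = c +ᵥ x := by rw [h]

theorem vadd_self (e : E) (x : X) : e +ᵥ (e +ᵥ x) = x := by
  rw [← add_vadd, h2', zero_vadd]

theorem stab_vadd (e : E) (x : X) : stabSet E X (e +ᵥ x) = stabSet E X x := by
  ext f
  simp only [stabSet, Set.mem_setOf_eq]
  constructor <;> intro h
  · have h3 : e +ᵥ (f +ᵥ x) = e +ᵥ x := by
      rw [← add_vadd, add_comm, add_vadd, h]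
    calc f +ᵥ x = e +ᵥ (e +ᵥ (f +ᵥ x)) := (vadd_self e _).symm
      _ = e +ᵥ (e +ᵥ x) := by rw [h3]
      _ = x := vadd_self e x
  · rw [← add_vadd, add_comm, add_vadd, h]

theorem mem_XA_vadd {A : Submodule (ZMod 2) E} (e : E) {x : X} (hx : x ∈ XA E X A) :
    e +ᵥ x ∈ XA E X A := by
  simpa only [XA, Set.mem_setOf_eq, stab_vadd] using hx

theorem vadd_stab {A : Submodule (ZMod 2) E} {x : X} (hx : x ∈ XA E X A) {a : E}
    (ha : a ∈ A) : a +ᵥ x = x := by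
  have h : a ∈ stabSet E X x := by
    rw [XA, Set.mem_setOf_eq] at hx; rw [hx]; exact ha
  exact h

theorem vadd_mem_A {A : Submodule (ZMod 2) E} {x : X} (hx : x ∈ XA E X A) {a : E}
    (ha : a +ᵥ x = x) : a ∈ A := by
  rw [XA, Set.mem_setOf_eq] at hx
  rw [← SetLike.mem_coe, ← hx]; exact ha

theorem mem_orb_self (x : X) : x ∈ orb E X x := ⟨0, (zero_vadd E x).symm⟩

theorem orb_vadd (e : E) (x : X) : orb E X (e +ᵥ x) = orb E X x := by
  ext y
  constructor
  · rintro ⟨f, rfl⟩; exact ⟨f + e, by rw [add_vadd]⟩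
  · rintro ⟨f, rfl⟩; exact ⟨f + e, by rw [add_vadd, vadd_self]⟩

theorem orb_eq_of_mem {x y : X} (h : y ∈ orb E X x) : orb E X y = orb E X x := by
  obtain ⟨e, rfl⟩ := h; exact orb_vadd e x

theorem mem_orbEB_self (B : Submodule (ZMod 2) E) (x y : X) : (x, y) ∈ orbEB E X B x y :=
  ⟨0, 0, B.zero_mem, by simp⟩

theorem orbEB_eq_of_mem {B : Submodule (ZMod 2) E} {x y : X} {q : X × X}
    (h : q ∈ orbEB E X B x y) : orbEB E X B q.1 q.2 = orbEB E X B x y := by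
  obtain ⟨e, b, hb, rfl⟩ := h
  ext q'
  simp only [orbEB, Set.mem_setOf_eq]
  constructor
  · rintro ⟨e', b', hb', rfl⟩
    refine ⟨e' + e, b' + b, B.add_mem hb' hb, ?_⟩
    rw [Prod.mk.injEq]
    exact ⟨by rw [← add_vadd]; exact vadd_congr x (by abel), by rw [add_vadd]⟩
  · rintro ⟨e', b', hb', rfl⟩
    refine ⟨e' + e, b' + b, B.add_mem hb' hb, ?_⟩
    rw [Prod.mk.injEq]
    constructor
    · rw [← add_vadd]
      refine vadd_congr x ?_
      rw [← sub_eq_zero]; abel_nf; simp [sm2]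
    · rw [← add_vadd]
      refine vadd_congr y ?_
      rw [← sub_eq_zero]; abel_nf; simp [sm2]

theorem p1_orbEB (B : Submodule (ZMod 2) E) (x y : X) :
    p1 X (orbEB E X B x y) = orb E X x := by
  ext u
  constructor
  · rintro ⟨⟨u', v⟩, ⟨e, b, hb, h⟩, rfl⟩
    rw [Prod.mk.injEq] at h
    exact ⟨e + b, h.1⟩
  · rintro ⟨e, rfl⟩
    exact ⟨(e +ᵥ x, e +ᵥ y), ⟨e, 0, B.zero_mem, by simp⟩, rfl⟩

set_option maxHeartbeats 1000000 in
/-- Orbit–stabilizer: `|orb x| * |P| = |E|` when `x ∈ X_P`. -/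
theorem orb_card (P : Submodule (ZMod 2) E) (x : X) (hx : x ∈ XA E X P) :
    Nat.card ↥(orb E X x) * Nat.card ↥P = Nat.card E := by
  have h := card_fiber (fun e : E => e +ᵥ x) (orb E X x) (fun e => ⟨e, rfl⟩) 1
    (Nat.card ↥P) ?_
  · rw [mul_one, ← Nat.card_eq_fintype_card] at h
    omega
  intro y hy
  rw [mul_one]
  obtain ⟨e₀, he₀⟩ := hy
  have hy' : y ∈ XA E X P := he₀ ▸ mem_XA_vadd e₀ hx
  refine Nat.card_congr ⟨fun p => ⟨p.val + e₀, ?_⟩, fun a => ⟨a.val + e₀, ?_⟩,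
    fun p => Subtype.ext (addcan _ _), fun a => Subtype.ext (addcan _ _)⟩
  · obtain ⟨pv, hp⟩ := p
    simp only at hp ⊢
    refine vadd_mem_A hx ?_
    calc (pv + e₀) +ᵥ x = pv +ᵥ (e₀ +ᵥ x) := by rw [add_vadd]
      _ = pv +ᵥ y := by rw [← he₀]
      _ = pv +ᵥ (pv +ᵥ x) := by rw [← hp]
      _ = x := vadd_self _ _
  · calc (a.val + e₀) +ᵥ x = a.val +ᵥ (e₀ +ᵥ x) := by rw [add_vadd]
      _ = a.val +ᵥ y := by rw [← he₀]
      _ = y := vadd_stab hy' a.2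

set_option maxHeartbeats 1000000 in
/-- `|X_C| * |C| = |X̄_C| * |E|`. -/
theorem XC_card (C : Submodule (ZMod 2) E) :
    Nat.card ↥(XA E X C) * Nat.card ↥C = Nat.card ↥(barX E X C) * Nat.card E := by
  have h := card_fiber (fun x : ↥(XA E X C) => orb E X x.val) (barX E X C)
    (fun x => ⟨x.val, x.2, rfl⟩) (Nat.card ↥C) (Nat.card E) ?_
  · rw [← Nat.card_eq_fintype_card] at h
    exact h
  rintro s ⟨x₀, hx₀, rfl⟩
  have key : Nat.card {x : ↥(XA E X C) // orb E X x.val = orb E X x₀}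
      = Nat.card ↥(orb E X x₀) := by
    refine Nat.card_congr ⟨fun p => ⟨p.val.val, ?_⟩, fun w => ⟨⟨w.val, ?_⟩, ?_⟩,
      fun p => Subtype.ext (Subtype.ext rfl), fun w => Subtype.ext rfl⟩
    · have hm := mem_orb_self (E := E) p.val.val
      rwa [p.2] at hm
    · obtain ⟨e, he⟩ := w.2
      exact he ▸ mem_XA_vadd e hx₀
    · exact orb_eq_of_mem w.2
  rw [key, orb_card C x₀ hx₀]

set_option maxHeartbeats 1000000 in
/-- `|orbEB x y| * |U_{ABC}| = |E| * |B|`. -/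
theorem orbEB_card (A B C : Submodule (ZMod 2) E) (x y : X)
    (hx : x ∈ XA E X A) (hy : y ∈ XA E X C) :
    Nat.card ↥(orbEB E X B x y) * Nat.card ↥(UABC E A B C)
      = Nat.card E * Nat.card ↥B := by
  have h := card_fiber (fun p : E × ↥B => ((p.1 + p.2.val) +ᵥ x, p.1 +ᵥ y))
    (orbEB E X B x y) (fun p => ⟨p.1, p.2.val, p.2.2, rfl⟩) 1
    (Nat.card ↥(UABC E A B C)) ?_
  · rw [mul_one, Fintype.card_prod, ← Nat.card_eq_fintype_card,
      ← Nat.card_eq_fintype_card] at h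
    omega
  intro q hq
  rw [mul_one]
  obtain ⟨e₀, b₀, hb₀, hq'⟩ := hq
  refine Nat.card_congr
    ⟨fun p => ⟨(p.val.1 + p.val.2.val + e₀ + b₀, p.val.2.val + b₀, p.val.1 + e₀),
      ?_, B.add_mem p.val.2.2 hb₀, ?_, ?_⟩,
     fun t => ⟨(t.val.2.2 + e₀, ⟨t.val.2.1 + b₀, B.add_mem t.2.2.1 hb₀⟩), ?_⟩,
     ?_, ?_⟩
  · have h1 : (p.val.1 + p.val.2.val) +ᵥ x = (e₀ + b₀) +ᵥ x := by
      have h4 := congrArg Prod.fst p.2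
      simp only at h4
      rw [h4, hq']
    refine vadd_mem_A hx ?_
    calc (p.val.1 + p.val.2.val + e₀ + b₀) +ᵥ x
        = (e₀ + b₀) +ᵥ ((p.val.1 + p.val.2.val) +ᵥ x) := by
          rw [← add_vadd]; exact vadd_congr x (by abel)
      _ = (e₀ + b₀) +ᵥ ((e₀ + b₀) +ᵥ x) := by rw [h1]
      _ = x := vadd_self _ _
  · have h2 : p.val.1 +ᵥ y = e₀ +ᵥ y := by
      have h4 := congrArg Prod.snd p.2
      simp only at h4
      rw [h4, hq']
    refine vadd_mem_A hy ?_
    calc (p.val.1 + e₀) +ᵥ y = e₀ +ᵥ (p.val.1 +ᵥ y) := by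
          rw [← add_vadd]; exact vadd_congr y (add_comm _ _)
      _ = e₀ +ᵥ (e₀ +ᵥ y) := by rw [h2]
      _ = y := vadd_self _ _
  · show (p.val.1 + p.val.2.val + e₀ + b₀) + (p.val.2.val + b₀) + (p.val.1 + e₀) = 0
    rw [← sub_eq_zero]; abel_nf; simp [sm2]
  · obtain ⟨ha, hbm, hc, hsum⟩ := t.2
    have ha2 : t.val.1 = t.val.2.1 + t.val.2.2 := by
      have h3 : t.val.1 + (t.val.2.1 + t.val.2.2) = 0 := by rw [← add_assoc]; exact hsum
      rw [add_eq_zero_iff_eq_neg.mp h3, neg_eq']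
    rw [hq', Prod.mk.injEq]
    constructor
    · calc (t.val.2.2 + e₀ + (t.val.2.1 + b₀)) +ᵥ x
          = (e₀ + b₀) +ᵥ ((t.val.2.1 + t.val.2.2) +ᵥ x) := by
            rw [← add_vadd]; exact vadd_congr x (by abel)
        _ = (e₀ + b₀) +ᵥ (t.val.1 +ᵥ x) := by rw [← ha2]
        _ = (e₀ + b₀) +ᵥ x := by rw [vadd_stab hx ha]
    · calc (t.val.2.2 + e₀) +ᵥ y = e₀ +ᵥ (t.val.2.2 +ᵥ y) := by
            rw [← add_vadd]; exact vadd_congr y (add_comm _ _)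
        _ = e₀ +ᵥ y := by rw [vadd_stab hy hc]
  · intro p
    refine Subtype.ext (Prod.ext ?_ (Subtype.ext ?_))
    · show p.val.1 + e₀ + e₀ = p.val.1
      exact addcan _ _
    · show p.val.2.val + b₀ + b₀ = p.val.2.val
      exact addcan _ _
  · intro t
    have h3 : t.val.1 + (t.val.2.1 + t.val.2.2) = 0 := by
      rw [← add_assoc]; exact t.2.2.2.2
    have ha2 : t.val.1 = t.val.2.1 + t.val.2.2 := by
      rw [add_eq_zero_iff_eq_neg.mp h3, neg_eq']
    refine Subtype.ext (Prod.ext ?_ (Prod.ext ?_ ?_))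
    · show t.val.2.2 + e₀ + (t.val.2.1 + b₀) + e₀ + b₀ = t.val.1
      rw [ha2, ← sub_eq_zero]; abel_nf; simp [sm2]
    · show t.val.2.1 + b₀ + b₀ = t.val.2.1
      exact addcan _ _
    · show t.val.2.2 + e₀ + e₀ = t.val.2.2
      exact addcan _ _

variable (E X)

set_option maxHeartbeats 1000000 in
/-- the number of `E × B`-orbits `𝓜` on `X²_{AC}` with `p₁𝓜 = o`
equals `|E|·|X̄_C|·|U_{ABC}|/(|A|·|B|·|C|)`. -/
theorem statement19 (A B C : Submodule (ZMod 2) E) (o : Set X)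
    (ho : ∃ x ∈ XA E X A, o = orb E X x) :
    (Nat.card ↥{M : Set (X × X) | IsOrbEB E X A B C M ∧ p1 X M = o} : ℚ) =
      (Nat.card E : ℚ) * (Nat.card ↥(barX E X C) : ℚ) * (Nat.card ↥(UABC E A B C) : ℚ)
        / ((Nat.card ↥A : ℚ) * (Nat.card ↥B : ℚ) * (Nat.card ↥C : ℚ)) := by
  classical
  obtain ⟨x₀, hx₀, rfl⟩ := ho
  have hmem3 : ∀ p : ↥(orb E X x₀) × ↥(XA E X C),
      orbEB E X B p.1.val p.2.val
        ∈ {M : Set (X × X) | IsOrbEB E X A B C M ∧ p1 X M = orb E X x₀} := by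
    intro p
    have hx1 : p.1.val ∈ XA E X A := by
      obtain ⟨e, he⟩ := p.1.2
      exact he ▸ mem_XA_vadd e hx₀
    refine ⟨⟨p.1.val, p.2.val, hx1, p.2.2, rfl⟩, ?_⟩
    rw [p1_orbEB]
    exact orb_eq_of_mem p.1.2
  have hfib : ∀ M ∈ {M : Set (X × X) | IsOrbEB E X A B C M ∧ p1 X M = orb E X x₀},
      Nat.card {p : ↥(orb E X x₀) × ↥(XA E X C) // orbEB E X B p.1.val p.2.val = M}
        * Nat.card ↥(UABC E A B C) = Nat.card E * Nat.card ↥B := by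
    rintro M ⟨⟨x₁, y₁, hx₁, hy₁, rfl⟩, hp1⟩
    rw [p1_orbEB] at hp1
    have key : Nat.card {p : ↥(orb E X x₀) × ↥(XA E X C) //
          orbEB E X B p.1.val p.2.val = orbEB E X B x₁ y₁}
        = Nat.card ↥(orbEB E X B x₁ y₁) := by
      refine Nat.card_congr ⟨fun p => ⟨(p.val.1.val, p.val.2.val), ?_⟩,
        fun q => ⟨(⟨q.val.1, ?_⟩, ⟨q.val.2, ?_⟩), ?_⟩, ?_, ?_⟩
      · have hm := mem_orbEB_self B p.val.1.val p.val.2.val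
        rwa [p.2] at hm
      · obtain ⟨e, b, hb, hq⟩ := q.2
        have h5 : q.val.1 = (e + b) +ᵥ x₁ := congrArg Prod.fst hq
        rw [h5, ← hp1]
        exact ⟨e + b, rfl⟩
      · obtain ⟨e, b, hb, hq⟩ := q.2
        have h5 : q.val.2 = e +ᵥ y₁ := congrArg Prod.snd hq
        rw [h5]
        exact mem_XA_vadd e hy₁
      · exact orbEB_eq_of_mem q.2
      · intro p
        exact Subtype.ext (Prod.ext (Subtype.ext rfl) (Subtype.ext rfl))
      · intro q
        exact Subtype.ext rfl
    rw [key]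
    exact orbEB_card A B C x₁ y₁ hx₁ hy₁
  have h3 := card_fiber
    (fun p : ↥(orb E X x₀) × ↥(XA E X C) => orbEB E X B p.1.val p.2.val)
    {M : Set (X × X) | IsOrbEB E X A B C M ∧ p1 X M = orb E X x₀} hmem3
    (Nat.card ↥(UABC E A B C)) (Nat.card E * Nat.card ↥B) hfib
  rw [Fintype.card_prod, ← Nat.card_eq_fintype_card, ← Nat.card_eq_fintype_card] at h3
  have h1 := orb_card A x₀ hx₀
  have h2 := XC_card (X := X) C
  have hApos : 0 < Nat.card ↥A := Nat.card_pos
  have hBpos : 0 < Nat.card ↥B := Nat.card_pos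
  have hCpos : 0 < Nat.card ↥C := Nat.card_pos
  have hne : Nonempty E := ⟨0⟩
  have hEpos : 0 < Nat.card E := Nat.card_pos
  have hA : (Nat.card ↥A : ℚ) ≠ 0 := by exact_mod_cast hApos.ne'
  have hB : (Nat.card ↥B : ℚ) ≠ 0 := by exact_mod_cast hBpos.ne'
  have hC : (Nat.card ↥C : ℚ) ≠ 0 := by exact_mod_cast hCpos.ne'
  have hE : (Nat.card E : ℚ) ≠ 0 := by exact_mod_cast hEpos.ne'
  rw [eq_div_iff (mul_ne_zero (mul_ne_zero hA hB) hC)]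
  have q1 : (Nat.card ↥(orb E X x₀) : ℚ) * (Nat.card ↥A : ℚ) = (Nat.card E : ℚ) := by
    exact_mod_cast h1
  have q2 : (Nat.card ↥(XA E X C) : ℚ) * (Nat.card ↥C : ℚ)
      = (Nat.card ↥(barX E X C) : ℚ) * (Nat.card E : ℚ) := by
    exact_mod_cast h2
  have q3 : (Nat.card ↥(orb E X x₀) : ℚ) * (Nat.card ↥(XA E X C) : ℚ)
        * (Nat.card ↥(UABC E A B C) : ℚ)
      = (Nat.card ↥{M : Set (X × X) | IsOrbEB E X A B C M ∧ p1 X M = orb E X x₀} : ℚ)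
        * ((Nat.card E : ℚ) * (Nat.card ↥B : ℚ)) := by
    exact_mod_cast h3
  refine mul_right_cancel₀ hE ?_
  linear_combination
    ((Nat.card ↥C : ℚ) * (Nat.card ↥(XA E X C) : ℚ) * (Nat.card ↥(UABC E A B C) : ℚ)) * q1
    + ((Nat.card E : ℚ) * (Nat.card ↥(UABC E A B C) : ℚ)) * q2
    - ((Nat.card ↥A : ℚ) * (Nat.card ↥C : ℚ)) * q3


end Lusztig
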